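/- Let Σ be the covariance matrix of a normalized Gaussian tree G = (V,E,W) on N nodes (unit diagonal, σ_ij the product of edge weights along the unique path from i to j). Then det Σ = ∏_{e_ij ∈ E} (1 − w_ij²). -/

import Mathlib

open SimpleGraph Matrix

lemma interior_two_neighbors {V : Type} {G : SimpleGraph V} {a b v : V}
    (p : G.Walk a b) (hp : p.IsPath) (hv : v ∈ p.support) (ha : v ≠ a) (hb : v ≠ b) :
    ∃ x y, x ≠ y ∧ G.Adj v x ∧ G.Adj v y := by
  induction p with
  | nil => simp at hv; exact absurd hv ha
  | @cons a c b h q IH =>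
    rw [SimpleGraph.Walk.cons_isPath_iff] at hp
    rw [SimpleGraph.Walk.support_cons, List.mem_cons] at hv
    rcases hv with rfl | hv
    · exact absurd rfl ha
    rcases eq_or_ne v c with rfl | hvc
    · cases q with
      | nil => exact absurd rfl hb
      | @cons _ d _ h' q' =>
        refine ⟨a, d, ?_, h.symm, h'⟩
        rintro rfl
        exact hp.2 (by simp)
    · exact IH hp.1 hv hvc hb

lemma lift_walk {V : Type} {G : SimpleGraph V} {v : V} :
    ∀ {a b : V} (p : G.Walk a b), v ∉ p.support → ∀ (ha : a ≠ v) (hb : b ≠ v),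
    (G.comap (Subtype.val : {x : V // x ≠ v} → V)).Reachable ⟨a, ha⟩ ⟨b, hb⟩ := by
  intro a b p
  induction p with
  | nil => intro _ ha hb; exact Reachable.refl _
  | @cons a c b h q IH =>
    intro hs ha hb
    rw [Walk.support_cons, List.mem_cons] at hs
    push_neg at hs
    have hc : c ≠ v := by
      intro hcv; exact hs.2 (hcv ▸ q.start_mem_support)
    exact Reachable.trans (SimpleGraph.Adj.reachable (by exact h)) (IH hs.2 hc hb)

lemma exists_leaf {V : Type} [Fintype V] [DecidableEq V] {G : SimpleGraph V}
    [DecidableRel G.Adj] (hG : G.IsTree) (h2 : 2 ≤ Fintype.card V) :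
    ∃ v, G.degree v = 1 := by
  by_contra hno
  push_neg at hno
  have hdeg : ∀ v, 2 ≤ G.degree v := by
    intro v
    have h1 : 0 < G.degree v := by
      rw [SimpleGraph.degree_pos_iff_exists_adj]
      obtain ⟨u, hu⟩ := Fintype.exists_ne_of_one_lt_card h2 v
      obtain ⟨p⟩ := hG.isConnected.preconnected v u
      cases p with
      | nil => exact absurd rfl hu
      | cons h q => exact ⟨_, h⟩
    have := hno v
    omega
  have hsum := G.sum_degrees_eq_twice_card_edges
  have hcard := hG.card_edgeFinset
  have : 2 * Fintype.card V ≤ ∑ v, G.degree v := by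
    calc 2 * Fintype.card V = ∑ _v : V, 2 := by simp [mul_comm]
    _ ≤ ∑ v, G.degree v := Finset.sum_le_sum (fun v _ => hdeg v)
  rw [hsum] at this
  omega

lemma key : ∀ (n : ℕ) (V : Type) [Fintype V] [DecidableEq V]
    (G : SimpleGraph V) [DecidableRel G.Adj],
    Fintype.card V = n → G.IsTree → ∀ (w : V → V → ℝ),
    (∀ i j, w i j = w j i) → ∀ (Cov : Matrix V V ℝ),
    (∀ i j (p : G.Walk i j), p.IsPath →
      Cov i j = (p.darts.map (fun d => w d.toProd.1 d.toProd.2)).prod) →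
    Cov.det = ∏ e ∈ G.edgeFinset,
      Sym2.lift ⟨fun a b => 1 - w a b * w b a, fun a b => by ring⟩ e := by
  intro n
  induction n using Nat.strong_induction_on with
  | _ n IH =>
  intro V _ _ G _ hcard hG w hsymm Cov hCov
  have hCovSelf : ∀ i, Cov i i = 1 := by
    intro i
    simpa using hCov i i Walk.nil Walk.IsPath.nil
  match n, hcard, IH with
  | 0, hcard, IH =>
    have := hG.isConnected.nonempty
    have := Fintype.card_pos_iff.mpr this
    omega
  | 1, hcard, IH =>
    haveI : Unique V := Fintype.card_eq_one_iff_nonempty_unique.mp hcard |>.some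
    have hE : G.edgeFinset = ∅ := by
      ext e
      refine e.ind (fun a b => ?_)
      simp only [Finset.notMem_empty, iff_false, mem_edgeFinset, mem_edgeSet]
      intro h
      exact h.ne (Subsingleton.elim a b)
    rw [hE, Finset.prod_empty, Matrix.det_unique, hCovSelf]
  | (m+2), hcard, IH =>
    obtain ⟨v, hdeg⟩ := exists_leaf hG (by omega)
    obtain ⟨u, hu⟩ := Finset.card_eq_one.mp hdeg
    have hadj : G.Adj v u := by
      rw [← SimpleGraph.mem_neighborFinset, hu]; exact Finset.mem_singleton_self u
    have huniq : ∀ x, G.Adj v x → x = u := by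
      intro x hx
      have := (SimpleGraph.mem_neighborFinset G v x).mpr hx
      rwa [hu, Finset.mem_singleton] at this
    have hvu : v ≠ u := hadj.ne
    set G' : SimpleGraph {x : V // x ≠ v} := G.comap (Subtype.val) with hG'
    haveI : DecidableRel G'.Adj := SimpleGraph.instDecidableComapAdj _ _
    have hcard' : Fintype.card {x : V // x ≠ v} = m + 1 := by
      have h1 : Fintype.card {x : V // x = v} = 1 := Fintype.card_subtype_eq v
      have h2 := Fintype.card_subtype_compl (fun x : V => x = v)
      rw [h1, hcard] at h2
      exact h2
    let femb : G' ↪g G := SimpleGraph.Embedding.comap (Function.Embedding.subtype _) G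
    have hfemb : ∀ (x : {x : V // x ≠ v}), femb x = x.1 := fun _ => rfl
    -- no path avoids the leaf unless it's an endpoint
    have havoid : ∀ {a b : V} (p : G.Walk a b), p.IsPath → a ≠ v → b ≠ v → v ∉ p.support := by
      intro a b p hp ha hb hvp
      obtain ⟨x, y, hxy, hx, hy⟩ := interior_two_neighbors p hp hvp (Ne.symm ha) (Ne.symm hb)
      rw [huniq x hx, huniq y hy] at hxy
      exact hxy rfl
    have hG'conn : G'.Connected := by
      rw [connected_iff]
      refine ⟨?_, ⟨⟨u, hadj.ne'⟩⟩⟩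
      rintro ⟨a, ha⟩ ⟨b, hb⟩
      obtain ⟨p⟩ := hG.isConnected.preconnected a b
      exact lift_walk p.toPath (havoid _ p.toPath.2 ha hb) ha hb
    have hG'acyc : G'.IsAcyclic := by
      intro x c hc
      exact hG.IsAcyclic _
        ((Walk.map_isCycle_iff_of_injective (f := femb.toHom) Subtype.val_injective).mpr hc)
    have hG'tree : G'.IsTree := ⟨hG'conn, hG'acyc⟩
    -- lifted data
    set w' : {x : V // x ≠ v} → {x : V // x ≠ v} → ℝ := fun a b => w a.1 b.1 with hw'
    set Cov' : Matrix {x : V // x ≠ v} {x : V // x ≠ v} ℝ :=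
      Matrix.of (fun i j => Cov i.1 j.1) with hCovdef
    have hCov' : ∀ (i j : {x : V // x ≠ v}) (p : G'.Walk i j), p.IsPath →
        Cov' i j = (p.darts.map (fun d => w' d.toProd.1 d.toProd.2)).prod := by
      intro i j p hp
      have := hCov i.1 j.1 (p.map femb.toHom)
        (Walk.map_isPath_of_injective Subtype.val_injective hp)
      erw [Walk.darts_map, List.map_map] at this
      exact this
    have hdet' := IH (m+1) (by omega) _ G' hcard' hG'tree w'
      (fun i j => hsymm i.1 j.1) Cov' hCov'
    -- row identities
    have hreach : ∀ (j : {x : V // x ≠ v}), ∃ (p : G.Walk u j.1), p.IsPath ∧ v ∉ p.support := by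
      intro j
      obtain ⟨p'⟩ := hG'conn.preconnected ⟨u, hadj.ne'⟩ j
      let fhom : G' →g G := ⟨Subtype.val, fun {a b} h => h⟩
      have hinj : Function.Injective fhom := Subtype.val_injective
      have hp2 : ((p'.toPath : G'.Walk _ _).map fhom).IsPath :=
        (Walk.isPath_map_iff_of_injective hinj).mpr (by exact p'.toPath.2)
      refine ⟨((p'.toPath : G'.Walk _ _).map fhom).copy rfl rfl,
        (Walk.isPath_copy _ _ _).mpr (by exact hp2), ?_⟩
      rw [Walk.support_copy, Walk.support_map]
      simp only [List.mem_map, not_exists, not_and]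
      intro x _
      exact x.2
    have hrow : ∀ j, j ≠ v → Cov v j = w v u * Cov u j := by
      intro j hj
      obtain ⟨p, hp, hvp⟩ := hreach ⟨j, hj⟩
      have h1 := hCov v j (Walk.cons hadj p) (hp.cons hvp)
      have h2 := hCov u j p hp
      simp only [Walk.darts_cons, List.map_cons, List.prod_cons] at h1
      rw [h1, ← h2]
    have hCovuv : Cov u v = w u v := by
      have := hCov u v (Walk.cons hadj.symm Walk.nil)
        (by simp [Walk.cons_isPath_iff, hadj.ne'])
      simpa using this
    -- determinant manipulation
    have hdet1 : Cov.det = (Cov.updateRow v (Cov v + (-(w v u)) • Cov u)).det :=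
      (det_updateRow_add_smul_self Cov hvu (-(w v u))).symm
    set D := Cov.updateRow v (Cov v + (-(w v u)) • Cov u) with hD
    have hDv : ∀ j, D v j = Cov v j - w v u * Cov u j := by
      intro j
      rw [hD, updateRow_self]
      simp [neg_mul]
      ring
    have hDrow0 : ∀ j, j ≠ v → D v j = 0 := fun j hj => by
      rw [hDv, hrow j hj]; ring
    have hDvv : D v v = 1 - w v u * w u v := by
      rw [hDv, hCovSelf, hCovuv]
    have hDne : ∀ (i : V), i ≠ v → ∀ j, D i j = Cov i j := fun i hi j => by
      rw [hD, updateRow_ne hi]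
    -- block decomposition
    haveI : Unique {x : V // ¬ x ≠ v} :=
      ⟨⟨⟨v, not_not_intro rfl⟩⟩, by
        rintro ⟨x, hx⟩
        exact Subtype.ext (not_not.mp hx)⟩
    have hvdef : ((default : {x : V // ¬ x ≠ v}) : V) = v := by simpa using (default : {x : V // ¬ x ≠ v}).2
    let e : {x : V // x ≠ v} ⊕ {x : V // ¬ x ≠ v} ≃ V := Equiv.sumCompl (fun x => x ≠ v)
    have hdet2 : D.det = (D.submatrix e e).det := (det_submatrix_equiv_self e D).symm
    set M := D.submatrix e e with hM
    have hM21 : M.toBlocks₂₁ = 0 := by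
      ext i j
      have hiv : (i : V) = v := not_not.mp i.2
      show D (e (Sum.inr i)) (e (Sum.inl j)) = 0
      rw [Equiv.sumCompl_apply_inr, Equiv.sumCompl_apply_inl, hiv]
      exact hDrow0 j.1 j.2
    have hM11 : M.toBlocks₁₁ = Cov' := by
      ext i j
      show D (e (Sum.inl i)) (e (Sum.inl j)) = Cov i.1 j.1
      rw [Equiv.sumCompl_apply_inl, Equiv.sumCompl_apply_inl]
      exact hDne i.1 i.2 j.1
    have hM22 : M.toBlocks₂₂.det = 1 - w v u * w u v := by
      rw [Matrix.det_unique]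
      show D (e (Sum.inr default)) (e (Sum.inr default)) = _
      rw [Equiv.sumCompl_apply_inr, hvdef]
      exact hDvv
    have hdet3 : M.det = Cov'.det * (1 - w v u * w u v) := by
      conv_lhs => rw [← Matrix.fromBlocks_toBlocks M]
      rw [hM21, hM11, Matrix.det_fromBlocks_zero₂₁, hM22]
    -- edge set decomposition
    have hedge : G.edgeFinset
        = insert s(v, u) (G'.edgeFinset.image (Sym2.map Subtype.val)) := by
      ext e'
      refine e'.ind (fun a b => ?_)
      simp only [mem_edgeFinset, mem_edgeSet, Finset.mem_insert, Finset.mem_image]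
      constructor
      · intro hab
        rcases eq_or_ne a v with rfl | hav
        · left; rw [huniq b hab]
        rcases eq_or_ne b v with rfl | hbv
        · left; rw [Sym2.eq_swap, huniq a hab.symm]
        · right
          refine ⟨s(⟨a, hav⟩, ⟨b, hbv⟩), ?_, by rw [Sym2.map_pair_eq]⟩
          exact hab
      · rintro (h | ⟨f', hf', hfeq⟩)
        · rw [Sym2.eq_iff] at h
          rcases h with ⟨rfl, rfl⟩ | ⟨rfl, rfl⟩
          · exact hadj
          · exact hadj.symm
        · revert hf' hfeq
          refine f'.ind (fun x y => ?_)
          intro hf' hfeq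
          rw [Sym2.map_pair_eq, Sym2.eq_iff] at hfeq
          have hxy : G.Adj x.1 y.1 := hf'
          rcases hfeq with ⟨rfl, rfl⟩ | ⟨rfl, rfl⟩
          · exact hxy
          · exact hxy.symm
    have hnotmem : s(v, u) ∉ G'.edgeFinset.image (Sym2.map Subtype.val) := by
      simp only [Finset.mem_image, not_exists, not_and]
      intro f' _
      refine f'.ind (fun x y => ?_)
      rw [Sym2.map_pair_eq, Sym2.eq_iff]
      rintro (⟨hxv, _⟩ | ⟨_, hyv⟩)
      · exact x.2 hxv
      · exact y.2 hyv
    rw [hedge, Finset.prod_insert hnotmem,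
      Finset.prod_image (fun x _ y _ h => Sym2.map.injective Subtype.val_injective h)]
    have hterm : ∀ f' : Sym2 {x : V // x ≠ v},
        Sym2.lift ⟨fun a b => 1 - w a b * w b a, fun a b => by ring⟩ (Sym2.map Subtype.val f')
        = Sym2.lift ⟨fun a b => 1 - w' a b * w' b a, fun a b => by ring⟩ f' := by
      intro f'
      refine f'.ind (fun x y => ?_)
      rw [Sym2.map_pair_eq, Sym2.lift_mk, Sym2.lift_mk]
    rw [Finset.prod_congr rfl (fun f' _ => hterm f'), Sym2.lift_mk]
    rw [hdet1, hdet2, hdet3, hdet']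
    ring

theorem stmt_10 (N : ℕ) (G : SimpleGraph (Fin N)) [DecidableRel G.Adj]
    (hG : G.IsTree) (w : Fin N → Fin N → ℝ)
    (hsymm : ∀ i j, w i j = w j i)
    (hw : ∀ i j, G.Adj i j → w i j ∈ Set.Ioo (-1:ℝ) 1)
    (Cov : Matrix (Fin N) (Fin N) ℝ)
    (hCov : ∀ i j (p : G.Walk i j), p.IsPath →
      Cov i j = (p.darts.map (fun d => w d.toProd.1 d.toProd.2)).prod) :
    Cov.det = ∏ e ∈ G.edgeFinset,
      Sym2.lift ⟨fun a b => 1 - w a b * w b a, fun a b => by ring⟩ e := by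
  exact key N (Fin N) G (Fintype.card_fin N) hG w hsymm Cov hCov
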